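/- Let k ≥ 1, let r be an odd integer, let a and b be integers divisible by 4, and let d be an integer with d·(1+ab) ≡ 1 (mod 2^k). Then for all integers x and y: ∑_{z mod 2^k} e( r(−bz² + 2z(y−dx) + a d² x²)/2^k ) = ∑_{z mod 2^k} e( r(−(1+ab)·b·z² + 2z(y−x) + a d y²)/2^k ). -/
import Mathlib


open Complex Finset

/-- `e(x) = exp(2πix)`. -/
noncomputable def eC (x : ℂ) : ℂ := Complex.exp (2 * Real.pi * Complex.I * x)

/-- 2-adic square roots of integers `≡ 1 (mod 16)`. -/
lemma sqrt_two_adic (c : ℤ) : ∀ K : ℕ, ∃ u w : ℤ, u = 1 + 8 * w ∧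
    (2 ^ (K + 4) : ℤ) ∣ u ^ 2 - (1 + 16 * c) := by
  intro K
  induction K with
  | zero => exact ⟨1, 0, by ring, ⟨-c, by ring⟩⟩
  | succ K ih =>
    obtain ⟨u, w, hu, t, ht⟩ := ih
    rcases Int.even_or_odd t with ⟨t2, ht2⟩ | ⟨t2, ht2⟩
    · exact ⟨u, w, hu, t2, by linear_combination ht + 2 ^ (K + 4) * ht2⟩
    · refine ⟨u + 2 ^ (K + 3), w + 2 ^ K, by rw [hu]; ring,
        ⟨t2 + 1 + 4 * w + 2 ^ (K + 1), ?_⟩⟩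
      linear_combination ht + 2 ^ (K + 4) * ht2 + 2 ^ (K + 4) * hu

/-- odd integers are invertible mod `2^k`. -/
lemma odd_inv (n : ℕ) (hn : ∃ k, n = 2 ^ k) (u : ℤ) (hu : Odd u) :
    ∃ U : ℤ, ((u : ZMod n)) * (U : ZMod n) = 1 := by
  obtain ⟨k, rfl⟩ := hn
  obtain ⟨j, hj⟩ := hu
  have h2 : IsCoprime u (2 : ℤ) := ⟨1, -j, by rw [hj]; ring⟩
  obtain ⟨c, e, hce⟩ := h2.pow_right (n := k)
  refine ⟨c, ?_⟩
  have h0 : ((2 : ℤ) ^ k : ZMod (2 ^ k)) = 0 := by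
    have := ZMod.natCast_self (2 ^ k)
    push_cast at this ⊢
    exact this
  calc (u : ZMod (2 ^ k)) * (c : ZMod (2 ^ k))
      = ((c * u + e * 2 ^ k : ℤ) : ZMod (2 ^ k)) - (e : ZMod (2 ^ k)) * ((2:ℤ) ^ k : ZMod (2^k)) := by
        push_cast; ring
    _ = 1 := by rw [hce, h0]; push_cast; ring

/-- sums over `range n` are sums over `ZMod n`. -/
lemma sum_range_zmod (n : ℕ) [NeZero n] (f : ZMod n → ℂ) :
    ∑ z ∈ Finset.range n, f (z : ZMod n) = ∑ t : ZMod n, f t := by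
  refine Finset.sum_nbij' (fun z => (z : ZMod n)) (fun t => t.val) (fun a _ => mem_univ _)
    (fun t _ => mem_range.mpr t.val_lt) (fun a ha => ZMod.val_cast_of_lt (mem_range.mp ha))
    (fun t _ => ZMod.natCast_zmod_val t) (fun a _ => rfl)

/-- reindexing a sum over `ZMod n` by an affine bijection. -/
lemma sum_affine (n : ℕ) [NeZero n] (u s U : ZMod n) (hU : u * U = 1) (f : ZMod n → ℂ) :
    ∑ t : ZMod n, f (u * t + s) = ∑ t : ZMod n, f t := by
  refine Fintype.sum_bijective (fun t => u * t + s) ?_ _ _ (fun t => rfl)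
  refine Function.bijective_iff_has_inverse.mpr ⟨fun t => U * (t - s), fun t => ?_, fun t => ?_⟩
  · show U * ((u * t + s) - s) = t
    linear_combination t * hU
  · show u * (U * (t - s)) + s = t
    linear_combination (t - s) * hU

/-- The core algebraic identity in a commutative ring. -/
lemma key_alg {R : Type*} [CommRing R] (A B w U V x y t r d a b s : R)
    (hU : (1 + 8 * w) * U = 1) (hV : (1 + 4 * w) * V = 1) (hAB : A * B = w * (1 + 4 * w))
    (hd : d = U ^ 2) (ha : a = 4 * A) (hb : b = 4 * B) (hs : s = 2 * A * U * V * (y + U * x)) :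
    r * (-b * ((1 + 8 * w) * t + s) ^ 2 + 2 * ((1 + 8 * w) * t + s) * (y - d * x)
        + a * d ^ 2 * x ^ 2)
      = r * (-(1 + a * b) * b * t ^ 2 + 2 * t * (y - x) + a * d * y ^ 2) := by
  subst hd ha hb hs
  have hT2 : -(4 * B) * (1 + 8 * w) ^ 2 = -(1 + 16 * (A * B)) * (4 * B) := by
    linear_combination (64 * B) * hAB
  have hT1 : -8 * B * (1 + 8 * w) * (2 * A * U * V * (y + U * x))
      + 2 * (1 + 8 * w) * (y - U ^ 2 * x) = 2 * (y - x) := by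
    linear_combination (-16 * (1 + 8 * w) * U * V * (y + U * x)) * hAB
      + (-16 * w * (y + U * x) * (1 + 4 * w) * V - 2 * U * x - 2 * x) * hU
      + (-16 * w * (y + U * x)) * hV
  have hT0 : -(4 * B) * (2 * A * U * V * (y + U * x)) ^ 2
      + 2 * (2 * A * U * V * (y + U * x)) * (y - U ^ 2 * x) + 4 * A * U ^ 4 * x ^ 2
      = 4 * A * U ^ 2 * y ^ 2 := by
    linear_combination (-16 * A * U ^ 2 * V ^ 2 * (y + U * x) ^ 2) * hAB
      + (-16 * A * w * U ^ 2 * V * (y + U * x) ^ 2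
          + 4 * A * (y + U * x) * (y * U ^ 2 - x * U ^ 3)) * hV
      + (-4 * A * (y + U * x) * y * U * V) * hU
  linear_combination r * (t ^ 2 * hT2 + t * hT1 + hT0)

/-- the Gauss-sum identity needed for multiplicativity of the propagators at
the prime 2: for `r` odd, `4 ∣ a`, `4 ∣ b`, and `d(1+ab) ≡ 1 (mod 2^k)`, and all integers
`x`, `y`:
`∑_{z mod 2^k} e(r(-bz² + 2z(y-dx) + ad²x²)/2^k)
  = ∑_{z mod 2^k} e(r(-(1+ab)bz² + 2z(y-x) + ady²)/2^k)`. -/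
theorem gauss_sum_identity (k : ℕ) (hk : 1 ≤ k) (r a b d : ℤ) (hr : Odd r)
    (ha : 4 ∣ a) (hb : 4 ∣ b) (hd : d * (1 + a * b) ≡ 1 [ZMOD (2 ^ k : ℤ)])
    (x y : ℤ) :
    ∑ z ∈ Finset.range (2 ^ k),
        eC ((r : ℂ) * (-(b : ℂ) * (z : ℂ) ^ 2 + 2 * (z : ℂ) * ((y : ℂ) - (d : ℂ) * (x : ℂ))
            + (a : ℂ) * (d : ℂ) ^ 2 * (x : ℂ) ^ 2) / (2 ^ k : ℂ)) =
      ∑ z ∈ Finset.range (2 ^ k),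
        eC ((r : ℂ) * (-(1 + (a : ℂ) * (b : ℂ)) * (b : ℂ) * (z : ℂ) ^ 2
            + 2 * (z : ℂ) * ((y : ℂ) - (x : ℂ))
            + (a : ℂ) * (d : ℂ) * (y : ℂ) ^ 2) / (2 ^ k : ℂ)) := by
  haveI : NeZero (2 ^ k) := ⟨by positivity⟩
  obtain ⟨a₁, ha1⟩ := ha
  obtain ⟨b₁, hb1⟩ := hb
  obtain ⟨u, w, hu, hdvd⟩ := sqrt_two_adic (a₁ * b₁) k
  obtain ⟨U, hU⟩ := odd_inv (2 ^ k) ⟨k, rfl⟩ u (by rw [hu]; exact ⟨4 * w, by ring⟩)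
  obtain ⟨V, hV⟩ := odd_inv (2 ^ k) ⟨k, rfl⟩ (1 + 4 * w) ⟨2 * w, by ring⟩
  -- basic cast facts in `ZMod (2^k)`
  have huz : (u : ZMod (2 ^ k)) = 1 + 8 * (w : ZMod (2 ^ k)) := by
    rw [hu]; push_cast; ring
  have haz : (a : ZMod (2 ^ k)) = 4 * (a₁ : ZMod (2 ^ k)) := by rw [ha1]; push_cast; ring
  have hbz : (b : ZMod (2 ^ k)) = 4 * (b₁ : ZMod (2 ^ k)) := by rw [hb1]; push_cast; ring
  -- the relation a₁ b₁ = w (1 + 4w) in ZMod (2^k)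
  obtain ⟨q, hq⟩ := hdvd
  have h16 : (16 : ℤ) * (w * (1 + 4 * w) - a₁ * b₁) = 16 * (2 ^ k * q) := by
    linear_combination hq - (u + 1 + 8 * w) * hu
  have hABint : w * (1 + 4 * w) - a₁ * b₁ = 2 ^ k * q :=
    mul_left_cancel₀ (by norm_num : (16 : ℤ) ≠ 0) h16
  have hAB : (a₁ : ZMod (2 ^ k)) * (b₁ : ZMod (2 ^ k))
      = (w : ZMod (2 ^ k)) * (1 + 4 * (w : ZMod (2 ^ k))) := by
    have h0 : ((w * (1 + 4 * w) - a₁ * b₁ : ℤ) : ZMod (2 ^ k)) = 0 := by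
      rw [ZMod.intCast_zmod_eq_zero_iff_dvd]
      exact ⟨q, by exact_mod_cast hABint⟩
    push_cast at h0
    linear_combination -h0
  -- d = U^2 in ZMod (2^k)
  have hu2 : ((u : ZMod (2 ^ k))) ^ 2 = 1 + (a : ZMod (2 ^ k)) * (b : ZMod (2 ^ k)) := by
    have h0 : ((u ^ 2 - (1 + 16 * (a₁ * b₁)) : ℤ) : ZMod (2 ^ k)) = 0 := by
      rw [ZMod.intCast_zmod_eq_zero_iff_dvd]
      refine dvd_trans ?_ ⟨q, hq⟩
      exact_mod_cast pow_dvd_pow (2 : ℤ) (by omega : k ≤ k + 4)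
    push_cast at h0
    rw [haz, hbz]
    linear_combination h0
  have hd1 : (d : ZMod (2 ^ k)) * (1 + (a : ZMod (2 ^ k)) * (b : ZMod (2 ^ k))) = 1 := by
    have := (ZMod.intCast_eq_intCast_iff (d * (1 + a * b)) 1 (2 ^ k)).mpr (by exact_mod_cast hd)
    push_cast at this
    linear_combination this
  have hdu : (d : ZMod (2 ^ k)) * ((u : ZMod (2 ^ k))) ^ 2 = 1 := by rw [hu2]; exact hd1
  have hdz : (d : ZMod (2 ^ k)) = (U : ZMod (2 ^ k)) ^ 2 := by
    linear_combination (U : ZMod (2 ^ k)) ^ 2 * hdu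
      - (d : ZMod (2 ^ k)) * ((u : ZMod (2 ^ k)) * (U : ZMod (2 ^ k)) + 1) * hU
  -- the shift
  set s : ℤ := 2 * a₁ * U * V * (y + U * x) with hs_def
  have hsz : (s : ZMod (2 ^ k)) = 2 * (a₁ : ZMod (2 ^ k)) * (U : ZMod (2 ^ k))
      * (V : ZMod (2 ^ k)) * ((y : ZMod (2 ^ k)) + (U : ZMod (2 ^ k)) * (x : ZMod (2 ^ k))) := by
    rw [hs_def]; push_cast; ring
  -- express both sides as sums of the standard character over ZMod (2^k)
  have hL : ∑ z ∈ Finset.range (2 ^ k),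
      eC ((r : ℂ) * (-(b : ℂ) * (z : ℂ) ^ 2 + 2 * (z : ℂ) * ((y : ℂ) - (d : ℂ) * (x : ℂ))
          + (a : ℂ) * (d : ℂ) ^ 2 * (x : ℂ) ^ 2) / (2 ^ k : ℂ))
      = ∑ t : ZMod (2 ^ k), ZMod.stdAddChar ((r : ZMod (2 ^ k)) *
          (-(b : ZMod (2 ^ k)) * t ^ 2
            + 2 * t * ((y : ZMod (2 ^ k)) - (d : ZMod (2 ^ k)) * (x : ZMod (2 ^ k)))
            + (a : ZMod (2 ^ k)) * (d : ZMod (2 ^ k)) ^ 2 * (x : ZMod (2 ^ k)) ^ 2)) := by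
    rw [← sum_range_zmod]
    refine Finset.sum_congr rfl fun z _ => ?_
    have harg : ((r * (-b * (z : ℤ) ^ 2 + 2 * (z : ℤ) * (y - d * x) + a * d ^ 2 * x ^ 2) : ℤ)
        : ZMod (2 ^ k)) = (r : ZMod (2 ^ k)) *
          (-(b : ZMod (2 ^ k)) * ((z : ℕ) : ZMod (2 ^ k)) ^ 2
            + 2 * ((z : ℕ) : ZMod (2 ^ k))
              * ((y : ZMod (2 ^ k)) - (d : ZMod (2 ^ k)) * (x : ZMod (2 ^ k)))
            + (a : ZMod (2 ^ k)) * (d : ZMod (2 ^ k)) ^ 2 * (x : ZMod (2 ^ k)) ^ 2) := by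
      push_cast; ring
    rw [← harg, ZMod.stdAddChar_coe]
    unfold eC
    congr 1
    push_cast
    ring
  have hR : ∑ z ∈ Finset.range (2 ^ k),
      eC ((r : ℂ) * (-(1 + (a : ℂ) * (b : ℂ)) * (b : ℂ) * (z : ℂ) ^ 2
          + 2 * (z : ℂ) * ((y : ℂ) - (x : ℂ))
          + (a : ℂ) * (d : ℂ) * (y : ℂ) ^ 2) / (2 ^ k : ℂ))
      = ∑ t : ZMod (2 ^ k), ZMod.stdAddChar ((r : ZMod (2 ^ k)) *
          (-(1 + (a : ZMod (2 ^ k)) * (b : ZMod (2 ^ k))) * (b : ZMod (2 ^ k)) * t ^ 2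
            + 2 * t * ((y : ZMod (2 ^ k)) - (x : ZMod (2 ^ k)))
            + (a : ZMod (2 ^ k)) * (d : ZMod (2 ^ k)) * (y : ZMod (2 ^ k)) ^ 2)) := by
    rw [← sum_range_zmod]
    refine Finset.sum_congr rfl fun z _ => ?_
    have harg : ((r * (-(1 + a * b) * b * (z : ℤ) ^ 2 + 2 * (z : ℤ) * (y - x)
        + a * d * y ^ 2) : ℤ) : ZMod (2 ^ k)) = (r : ZMod (2 ^ k)) *
          (-(1 + (a : ZMod (2 ^ k)) * (b : ZMod (2 ^ k))) * (b : ZMod (2 ^ k))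
              * ((z : ℕ) : ZMod (2 ^ k)) ^ 2
            + 2 * ((z : ℕ) : ZMod (2 ^ k)) * ((y : ZMod (2 ^ k)) - (x : ZMod (2 ^ k)))
            + (a : ZMod (2 ^ k)) * (d : ZMod (2 ^ k)) * (y : ZMod (2 ^ k)) ^ 2) := by
      push_cast; ring
    rw [← harg, ZMod.stdAddChar_coe]
    unfold eC
    congr 1
    push_cast
    ring
  rw [hL, hR]
  rw [← sum_affine (2 ^ k) (u : ZMod (2 ^ k)) (s : ZMod (2 ^ k)) (U : ZMod (2 ^ k)) hU]
  refine Finset.sum_congr rfl fun t _ => ?_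
  congr 1
  rw [huz, hsz]
  exact key_alg (a₁ : ZMod (2 ^ k)) (b₁ : ZMod (2 ^ k)) (w : ZMod (2 ^ k)) (U : ZMod (2 ^ k))
    (V : ZMod (2 ^ k)) (x : ZMod (2 ^ k)) (y : ZMod (2 ^ k)) t (r : ZMod (2 ^ k))
    (d : ZMod (2 ^ k)) (a : ZMod (2 ^ k)) (b : ZMod (2 ^ k)) _
    (huz ▸ hU) (by push_cast at hV ⊢; linear_combination hV) hAB hdz haz hbz rfl
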